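/- Let Sp(2) = {(a, b, c, d) ∈ ℍ⁴ : |a|² + |b|² = 1, |c|² + |d|² = 1, a·conj(b) + c·conj(d) = 0}, where conj denotes quaternionic conjugation. Define for unit quaternions q the principal action (a,b,c,d) ∙ q := (a, b, c·conj(q), d·conj(q)) and the star action q ⋆ (a,b,c,d) := (q·a·conj(q), q·b·conj(q), q·c, q·d). Then: (1) both actions map Sp(2) to itself; (2) the two actions commute: (q ⋆ p) ∙ r = q ⋆ (p ∙ r) for all unit quaternions q, r and p ∈ Sp(2); and (3) both actions are free. -/

import Mathlib

open Quaternion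

/-- The Gromoll–Meyer description of `Sp(2)` as quadruples of quaternions. -/
def Sp2 : Set (Quaternion ℝ × Quaternion ℝ × Quaternion ℝ × Quaternion ℝ) :=
  {p | normSq p.1 + normSq p.2.1 = 1 ∧
       normSq p.2.2.1 + normSq p.2.2.2 = 1 ∧
       p.1 * star p.2.1 + p.2.2.1 * star p.2.2.2 = 0}

/-- The principal (bullet) action `(a,b,c,d) ∙ q = (a, b, c·conj q, d·conj q)`. -/
noncomputable def bulletAct (p : Quaternion ℝ × Quaternion ℝ × Quaternion ℝ × Quaternion ℝ)
    (q : Quaternion ℝ) : Quaternion ℝ × Quaternion ℝ × Quaternion ℝ × Quaternion ℝ :=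
  (p.1, p.2.1, p.2.2.1 * star q, p.2.2.2 * star q)

/-- The star action `q ⋆ (a,b,c,d) = (q·a·conj q, q·b·conj q, q·c, q·d)`. -/
noncomputable def starAct (q : Quaternion ℝ)
    (p : Quaternion ℝ × Quaternion ℝ × Quaternion ℝ × Quaternion ℝ) :
    Quaternion ℝ × Quaternion ℝ × Quaternion ℝ × Quaternion ℝ :=
  (q * p.1 * star q, q * p.2.1 * star q, q * p.2.2.1, q * p.2.2.2)

/-- Both Gromoll–Meyer actions preserve `Sp(2)`, they commute, and both are
free. -/
theorem gromoll_meyer_actions :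
    (∀ q ∈ unitary (Quaternion ℝ), ∀ p ∈ Sp2, bulletAct p q ∈ Sp2 ∧ starAct q p ∈ Sp2) ∧
    (∀ (q r : Quaternion ℝ)
        (p : Quaternion ℝ × Quaternion ℝ × Quaternion ℝ × Quaternion ℝ),
      bulletAct (starAct q p) r = starAct q (bulletAct p r)) ∧
    (∀ q ∈ unitary (Quaternion ℝ), ∀ p ∈ Sp2, bulletAct p q = p → q = 1) ∧
    (∀ q ∈ unitary (Quaternion ℝ), ∀ p ∈ Sp2, starAct q p = p → q = 1) := by
  refine ⟨?_, ?_, ?_, ?_⟩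
  · intro q hq p hp
    obtain ⟨h1, h2, h3⟩ := hp
    have hsq : star q * q = 1 := hq.1
    have hqs : q * star q = 1 := hq.2
    have hn : normSq q = 1 := by
      have h := Quaternion.star_mul_self q
      rw [hsq] at h
      have h' : ((normSq q : ℝ) : Quaternion ℝ) = ((1 : ℝ) : Quaternion ℝ) := by
        rw [← h]; simp
      exact Quaternion.coe_injective h'
    have hns : normSq (star q) = 1 := by rw [Quaternion.normSq_star, hn]
    have cancel1 : ∀ x : Quaternion ℝ, star q * (q * x) = x := fun x => by
      rw [← mul_assoc, hsq, one_mul]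
    constructor
    · refine ⟨h1, ?_, ?_⟩
      · simp only [bulletAct, map_mul, hns, mul_one]
        exact h2
      · simp only [bulletAct]
        calc p.1 * star p.2.1 + p.2.2.1 * star q * star (p.2.2.2 * star q)
            = p.1 * star p.2.1 + p.2.2.1 * (star q * (q * star p.2.2.2)) := by
              rw [star_mul, star_star]; noncomm_ring
          _ = p.1 * star p.2.1 + p.2.2.1 * star p.2.2.2 := by rw [cancel1]
          _ = 0 := h3
    · refine ⟨?_, ?_, ?_⟩
      · simp only [starAct, map_mul, hn, hns, one_mul, mul_one]
        exact h1
      · simp only [starAct, map_mul, hn, one_mul]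
        exact h2
      · simp only [starAct]
        have e1 : q * p.1 * star q * star (q * p.2.1 * star q)
            = q * (p.1 * star p.2.1) * star q := by
          simp only [star_mul, star_star]
          calc q * p.1 * star q * (q * (star p.2.1 * star q))
              = q * p.1 * (star q * (q * (star p.2.1 * star q))) := by noncomm_ring
            _ = q * p.1 * (star p.2.1 * star q) := by rw [cancel1]
            _ = q * (p.1 * star p.2.1) * star q := by noncomm_ring
        have e2 : q * p.2.2.1 * star (q * p.2.2.2)
            = q * (p.2.2.1 * star p.2.2.2) * star q := by
          rw [star_mul]; noncomm_ring
        rw [e1, e2, ← add_mul, ← mul_add, h3, mul_zero, zero_mul]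
  · intro q r p
    simp only [bulletAct, starAct, mul_assoc]
  · intro q hq p hp heq
    obtain ⟨-, h2, -⟩ := hp
    have hc : p.2.2.1 * star q = p.2.2.1 := congrArg (fun x => x.2.2.1) heq
    have hd : p.2.2.2 * star q = p.2.2.2 := congrArg (fun x => x.2.2.2) heq
    have key : star q = 1 := by
      by_cases h : p.2.2.1 = 0
      · have hdne : p.2.2.2 ≠ 0 := by
          intro h'
          rw [h, h'] at h2; simp at h2
        have := hd
        nth_rewrite 2 [← mul_one p.2.2.2] at this
        exact mul_left_cancel₀ hdne this
      · have := hc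
        nth_rewrite 2 [← mul_one p.2.2.1] at this
        exact mul_left_cancel₀ h this
    calc q = star (star q) := (star_star q).symm
      _ = 1 := by rw [key, star_one]
  · intro q hq p hp heq
    obtain ⟨-, h2, -⟩ := hp
    have hc : q * p.2.2.1 = p.2.2.1 := congrArg (fun x => x.2.2.1) heq
    have hd : q * p.2.2.2 = p.2.2.2 := congrArg (fun x => x.2.2.2) heq
    by_cases h : p.2.2.1 = 0
    · have hdne : p.2.2.2 ≠ 0 := by
        intro h'
        rw [h, h'] at h2; simp at h2
      have := hd
      nth_rewrite 2 [← one_mul p.2.2.2] at this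
      exact mul_right_cancel₀ hdne this
    · have := hc
      nth_rewrite 2 [← one_mul p.2.2.1] at this
      exact mul_right_cancel₀ h this
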